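/- Define N^u_d(m) = Σ_{k=0}^{d} g_k(u,d)·p_k(m), where g_k(u,d) = C(d,k)·∏_{i=0}^{k-1}(r+i)·∏_{j=k+1}^{d}(d-j+r)(u+j+r) and p_k(m) = ∏_{i=0}^{k-1}(m+i+1-r). Then (u+d+m)(u-m+r)·N^u_d(m) = Σ_{k=0}^{d} g_k(u,d)·[ (u+d-k-1+r)(u+k+1)·p_k(m) + (2k+3-d-r)·p_{k+1}(m) − p_{k+2}(m) ], as an identity of polynomials in m, u-placeholder variables and r, for all natural numbers u and d. -/

import Mathlib

open Finset

/-- The two-variable polynomial ring `ℚ[m, r]`: variable `0` is `m` and variable `1` is `r`. -/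
noncomputable abbrev R2 : Type := MvPolynomial (Fin 2) ℚ

noncomputable def r : R2 := MvPolynomial.X 1

/-- `p k m = ∏_{i=0}^{k-1} (m+i+1-r)`, as a function of the element `m`. -/
noncomputable def p (k : ℕ) (m : R2) : R2 :=
  ∏ i ∈ Finset.range k, (m + (i : R2) + 1 - r)

/-- `g k u d = C(d,k) · ∏_{i=0}^{k-1}(r+i) · ∏_{j=k+1}^{d}(d-j+r)(u+j+r)`. -/
noncomputable def g (k u d : ℕ) : R2 :=
  (d.choose k : R2) * (∏ i ∈ Finset.range k, (r + (i : R2))) *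
    ∏ j ∈ Finset.Icc (k + 1) d, (((d : R2) - (j : R2) + r) * ((u : R2) + (j : R2) + r))

/-- `N u d m = Σ_{k=0}^{d} g_k(u,d) · p_k(m)`, as a function of the element `m`. -/
noncomputable def N (u d : ℕ) (m : R2) : R2 :=
  ∑ k ∈ Finset.range (d + 1), g k u d * p k m

theorem stmt15 (u d : ℕ) :
    ((u : R2) + (d : R2) + MvPolynomial.X 0) * ((u : R2) - MvPolynomial.X 0 + r) *
        N u d (MvPolynomial.X 0) =
      ∑ k ∈ Finset.range (d + 1),
        g k u d *
          (((u : R2) + (d : R2) - (k : R2) - 1 + r) * ((u : R2) + (k : R2) + 1) *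
              p k (MvPolynomial.X 0) +
            (2 * (k : R2) + 3 - (d : R2) - r) * p (k + 1) (MvPolynomial.X 0) -
            p (k + 2) (MvPolynomial.X 0)) := by
  unfold N
  rw [Finset.mul_sum]
  refine Finset.sum_congr rfl fun k _ => ?_
  have h1 : p (k + 1) (MvPolynomial.X 0) =
      p k (MvPolynomial.X 0) * (MvPolynomial.X 0 + (k : R2) + 1 - r) := by
    simp [p, Finset.prod_range_succ]
  have h2 : p (k + 2) (MvPolynomial.X 0) =
      p k (MvPolynomial.X 0) * (MvPolynomial.X 0 + (k : R2) + 1 - r) *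
        (MvPolynomial.X 0 + (k : R2) + 2 - r) := by
    show (∏ i ∈ Finset.range (k+1+1), (MvPolynomial.X 0 + (i : R2) + 1 - r)) = _
    rw [Finset.prod_range_succ, Finset.prod_range_succ]
    show p k (MvPolynomial.X 0) * _ * _ = _
    push_cast
    ring
  rw [h1, h2]
  ring
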